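/- arXiv:1212.2336 — 2 statements merged into one kernel-verified Lean document; each statement's English description precedes it below -/
import Mathlib

section
/- Let t, t', t'' be three pairwise distinct transpositions of S_{n+1}, no two of which commute, and such that t'' = t t' t (equivalently t'' = t' t t'). Then V_t ∩ V_{t'} = V_t ∩ H_{t''} = V_{t'} ∩ H_{t''}. In particular V_t ∩ (V_{t'} ∪ V_{t''}) = V_t. -/
/-! Basic setup: type A_n geometric representation, Weyl lines, combinatorics. -/

namespace TLpaper

/-- A permutation is a transposition. -/
def IsTransposition {α : Type} [DecidableEq α] (σ : Equiv.Perm α) : Prop :=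
  ∃ a b, a ≠ b ∧ σ = Equiv.swap a b

variable (k : Type) [Field k] [CharZero k] (n : ℕ)

/-- The reflecting hyperplane of a permutation `t` inside `V = {x | ∑ x i = 0}`:
the set of points of `V` fixed by permuting the coordinates by `t`.  For a
transposition `t = (a b)` this is `{x ∈ V | x a = x b}`. -/
def Hyp (t : Equiv.Perm (Fin (n + 1))) : Set (Fin (n + 1) → k) :=
  {x | (∑ i, x i) = 0 ∧ ∀ i, x (t i) = x i}

/-- A Weyl line: a one-dimensional linear subspace of `V` which is an
intersection of a (possibly empty) family of reflecting hyperplanes. -/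
def IsWeylLine (L : Set (Fin (n + 1) → k)) : Prop :=
  (∃ v : Fin (n + 1) → k, v ≠ 0 ∧ L = Set.range fun c : k => c • v) ∧
  ∃ T : Set (Equiv.Perm (Fin (n + 1))),
    (∀ t ∈ T, IsTransposition t) ∧
    L = {x | (∑ i, x i) = 0} ∩ ⋂ t ∈ T, Hyp k n t

/-- `Z`: the union of all Weyl lines. -/
def ZZ : Set (Fin (n + 1) → k) := ⋃ L ∈ {L | IsWeylLine k n L}, L

/-- `V_t`: the union of all Weyl lines transverse to `t` (i.e. not contained in `H_t`). -/
def Vt (t : Equiv.Perm (Fin (n + 1))) : Set (Fin (n + 1) → k) :=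
  ⋃ L ∈ {L | IsWeylLine k n L ∧ ¬L ⊆ Hyp k n t}, L

/-- The simple transposition `s_i = (i, i+1)` (0-indexed: it swaps coordinates
`i` and `i+1` of `Fin (n+1)`, for `i < n`). -/
def simple (i : ℕ) : Equiv.Perm (Fin (n + 1)) :=
  Equiv.swap (Fin.ofNat (n + 1) i) (Fin.ofNat (n + 1) (i + 1 : ℕ))

/-- `V_i := V_{s_i}`. -/
def Vi (i : ℕ) : Set (Fin (n + 1) → k) := Vt k n (simple n i)

/-- The action of a permutation on a subset of `k^{n+1}` (permuting coordinates). -/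
def permSet (σ : Equiv.Perm (Fin (n + 1))) (W : Set (Fin (n + 1) → k)) :
    Set (Fin (n + 1) → k) :=
  (fun x => x ∘ σ) '' W

/-- `i · W := V_i ∩ (W ∪ s_i (W))`. -/
def dotAct (i : ℕ) (W : Set (Fin (n + 1) → k)) : Set (Fin (n + 1) → k) :=
  Vi k n i ∩ (W ∪ permSet k n (simple n i) W)

/-- The set `W_{i_1 ⋯ i_m}` associated with a sequence of indices. -/
def seqSet : List ℕ → Set (Fin (n + 1) → k)
  | [] => ZZ k n
  | [i] => Vi k n i
  | i :: j :: l => dotAct k n i (seqSet (j :: l))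

/-- Membership in the family `𝒱_n`. -/
def memVn (W : Set (Fin (n + 1) → k)) : Prop :=
  ∃ l : List ℕ, l ≠ [] ∧ (∀ i ∈ l, i < n) ∧ W = seqSet k n l

/-- A set of pairwise commuting transpositions. -/
def CommTranspositions (Q : Set (Equiv.Perm (Fin (n + 1)))) : Prop :=
  (∀ t ∈ Q, IsTransposition t) ∧ ∀ t ∈ Q, ∀ t' ∈ Q, t * t' = t' * t


section Aux

variable {k : Type} [Field k] [CharZero k] {n : ℕ}

lemma swap_eval {α β : Type*} [DecidableEq α] (x : α → β) {p q : α} (h : x p = x q) (i : α) :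
    x (Equiv.swap p q i) = x i := by
  rcases eq_or_ne i p with rfl | hp
  · rw [Equiv.swap_apply_left, ← h]
  rcases eq_or_ne i q with rfl | hq
  · rw [Equiv.swap_apply_right, h]
  · rw [Equiv.swap_apply_of_ne_of_ne hp hq]

lemma mem_Hyp_iff {p q : Fin (n + 1)} (x : Fin (n + 1) → k) :
    x ∈ Hyp k n (Equiv.swap p q) ↔ (∑ i, x i) = 0 ∧ x p = x q := by
  constructor
  · rintro ⟨hs, hf⟩
    have := hf p
    rw [Equiv.swap_apply_left] at this
    exact ⟨hs, this.symm⟩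
  · rintro ⟨hs, h⟩
    exact ⟨hs, swap_eval x h⟩

lemma sum_eq_zero_of_weyl {L : Set (Fin (n + 1) → k)} (hL : IsWeylLine k n L)
    {x : Fin (n + 1) → k} (hx : x ∈ L) : (∑ i, x i) = 0 := by
  obtain ⟨-, T, -, rfl⟩ := hL
  exact hx.1

lemma weyl_subset_Hyp {L : Set (Fin (n + 1) → k)} (hL : IsWeylLine k n L)
    {x : Fin (n + 1) → k} (hx : x ∈ L) (hx0 : x ≠ 0)
    {p q : Fin (n + 1)} (h : x p = x q) : L ⊆ Hyp k n (Equiv.swap p q) := by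
  have hsum := sum_eq_zero_of_weyl hL hx
  obtain ⟨⟨v, hv, hLv⟩, -⟩ := hL
  rw [hLv] at hx ⊢
  obtain ⟨c₀, hc₀⟩ := hx
  have hc0 : c₀ ≠ 0 := fun h0 => hx0 (by rw [← hc₀, h0]; simp)
  have hveq : ∀ i, v i = c₀⁻¹ * x i := by
    intro i
    have := congrFun hc₀ i
    simp only [Pi.smul_apply, smul_eq_mul] at this
    field_simp [← this]
    linear_combination this
  rintro y ⟨c, rfl⟩
  rw [mem_Hyp_iff]
  constructor
  · have : ∀ i, (c • v) i = (c * c₀⁻¹) * x i := by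
      intro i
      simp only [Pi.smul_apply, smul_eq_mul, hveq i]
      ring
    rw [Finset.sum_congr rfl fun i _ => this i, ← Finset.mul_sum, hsum, mul_zero]
  · simp only [Pi.smul_apply, smul_eq_mul, hveq p, hveq q, h]

lemma weyl_aux {L : Set (Fin (n + 1) → k)} (hL : IsWeylLine k n L)
    {x : Fin (n + 1) → k} (hx : x ∈ L)
    {p q r : Fin (n + 1)} (hpq : x p ≠ x q) (hpr : x p ≠ x r) (hqr : x q ≠ x r)
    (hr : x r ≠ 0) : False := by
  classical
  obtain ⟨⟨v, hv0, hLv⟩, T, hTt, hLT⟩ := hL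
  set A : Finset (Fin (n + 1)) := Finset.univ.filter (fun i => x i = x p) with hA
  set B : Finset (Fin (n + 1)) := Finset.univ.filter (fun i => x i = x q) with hB
  have hAmem : p ∈ A := by simp [hA]
  have hBmem : q ∈ B := by simp [hB]
  have hAcard : (A.card : k) ≠ 0 := Nat.cast_ne_zero.2 (Finset.card_ne_zero_of_mem hAmem)
  have hBcard : (B.card : k) ≠ 0 := Nat.cast_ne_zero.2 (Finset.card_ne_zero_of_mem hBmem)
  set y : Fin (n + 1) → k :=
    fun i => if x i = x p then (B.card : k) else if x i = x q then -(A.card : k) else 0 with hy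
  have hysum : ∑ i, y i = 0 := by
    have hpt : ∀ i, y i =
        (if x i = x p then (B.card : k) else 0) + (if x i = x q then -(A.card : k) else 0) := by
      intro i
      simp only [hy]
      by_cases h1 : x i = x p
      · rw [if_pos h1, if_pos h1, if_neg (fun h2 => hpq (h1.symm.trans h2)), add_zero]
      · rw [if_neg h1, if_neg h1, zero_add]
    rw [Finset.sum_congr rfl fun i _ => hpt i, Finset.sum_add_distrib,
      ← Finset.sum_filter, ← Finset.sum_filter, ← hA, ← hB,
      Finset.sum_const, Finset.sum_const, nsmul_eq_mul, nsmul_eq_mul]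
    ring
  have hyL : y ∈ L := by
    rw [hLT]
    refine ⟨hysum, ?_⟩
    simp only [Set.mem_iInter]
    intro s hs
    obtain ⟨a, b, hab, rfl⟩ := hTt s hs
    have hxH : x ∈ Hyp k n (Equiv.swap a b) := by
      rw [hLT] at hx
      exact Set.mem_iInter₂.1 hx.2 _ hs
    refine ⟨hysum, fun i => ?_⟩
    simp only [hy, hxH.2 i]
  rw [hLv] at hyL
  obtain ⟨c₁, hc₁⟩ := hyL
  have hxL : x ∈ Set.range fun c : k => c • v := by rw [← hLv]; exact hx
  obtain ⟨c₀, hc₀⟩ := hxL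
  have hyr : y r = 0 := by
    have h1 : ¬ x r = x p := fun h => hpr h.symm
    have h2 : ¬ x r = x q := fun h => hqr h.symm
    simp only [hy]
    rw [if_neg h1, if_neg h2]
  have hvr : v r ≠ 0 := by
    intro h0
    apply hr
    rw [← hc₀]
    simp [h0]
  have hc1 : c₁ = 0 := by
    have hce := congrFun hc₁ r
    simp only [Pi.smul_apply, smul_eq_mul] at hce
    rw [hyr] at hce
    rcases mul_eq_zero.1 hce with h | h
    · exact h
    · exact absurd h hvr
  have : y p = 0 := by rw [← hc₁, hc1]; simp
  rw [hy] at this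
  simp only [if_pos rfl] at this
  exact hBcard this

lemma weyl_twoVal {L : Set (Fin (n + 1) → k)} (hL : IsWeylLine k n L)
    {x : Fin (n + 1) → k} (hx : x ∈ L) (a b c : Fin (n + 1)) :
    x a = x b ∨ x b = x c ∨ x a = x c := by
  by_contra h
  push_neg at h
  obtain ⟨hab, hbc, hac⟩ := h
  rcases eq_or_ne (x c) 0 with hc | hc
  · exact weyl_aux hL hx hbc (Ne.symm hab) (Ne.symm hac) (fun h0 => hac (h0.trans hc.symm))
  · exact weyl_aux hL hx hab hac hbc hc

lemma mem_Vt_iff {t : Equiv.Perm (Fin (n + 1))} {x : Fin (n + 1) → k} :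
    x ∈ Vt k n t ↔ ∃ L, (IsWeylLine k n L ∧ ¬L ⊆ Hyp k n t) ∧ x ∈ L := by
  simp [Vt]

lemma mem_Vt_of {L : Set (Fin (n + 1) → k)} (hL : IsWeylLine k n L)
    {x : Fin (n + 1) → k} (hx : x ∈ L) {p q : Fin (n + 1)} (hne : x p ≠ x q) :
    x ∈ Vt k n (Equiv.swap p q) := by
  rw [mem_Vt_iff]
  exact ⟨L, ⟨hL, fun hsub => hne ((mem_Hyp_iff x).1 (hsub hx)).2⟩, hx⟩

lemma exists_of_mem_Vt {x : Fin (n + 1) → k} {p q : Fin (n + 1)}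
    (hx : x ∈ Vt k n (Equiv.swap p q)) (hx0 : x ≠ 0) :
    ∃ L, IsWeylLine k n L ∧ x ∈ L ∧ x p ≠ x q := by
  rw [mem_Vt_iff] at hx
  obtain ⟨L, ⟨hL, hsub⟩, hxL⟩ := hx
  exact ⟨L, hL, hxL, fun h => hsub (weyl_subset_Hyp hL hxL hx0 h)⟩

lemma zero_mem_Vt {p q : Fin (n + 1)} (hpq : p ≠ q) :
    (0 : Fin (n + 1) → k) ∈ Vt k n (Equiv.swap p q) := by
  classical
  set v : Fin (n + 1) → k := fun i => if i = p then (n : k) else -1 with hv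
  have hvq : v q = -1 := by simp [hv, hpq.symm]
  have hvp : v p = (n : k) := by simp [hv]
  have hv0 : v ≠ 0 := by
    intro h
    have := congrFun h q
    rw [hvq] at this
    simp at this
  set T : Set (Equiv.Perm (Fin (n + 1))) :=
    {σ | ∃ i j : Fin (n + 1), i ≠ j ∧ i ≠ p ∧ j ≠ p ∧ σ = Equiv.swap i j} with hT
  have hsumv : ∑ i, v i = 0 := by
    have hpt : ∀ i, v i = (if i = p then ((n : k) + 1) else 0) - 1 := by
      intro i
      simp only [hv]
      split_ifs <;> ring
    rw [Finset.sum_congr rfl fun i _ => hpt i, Finset.sum_sub_distrib,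
      Finset.sum_ite_eq' Finset.univ p (fun _ => (n : k) + 1)]
    simp [Finset.card_univ, mul_comm]
  set L : Set (Fin (n + 1) → k) := Set.range fun c : k => c • v with hLv
  have hLdesc : L = {x : Fin (n + 1) → k | (∑ i, x i) = 0} ∩ ⋂ t ∈ T, Hyp k n t := by
    apply Set.Subset.antisymm
    · rintro y ⟨c, rfl⟩
      have hcs : ∑ i, (c • v) i = 0 := by
        simp only [Pi.smul_apply, smul_eq_mul]
        rw [← Finset.mul_sum, hsumv, mul_zero]
      refine ⟨hcs, ?_⟩
      simp only [Set.mem_iInter]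
      intro s hs
      obtain ⟨i, j, hij, hip, hjp, rfl⟩ := hs
      refine ⟨hcs, fun m => ?_⟩
      simp only [Pi.smul_apply, smul_eq_mul]
      congr 1
      rcases eq_or_ne m p with rfl | hm
      · rw [Equiv.swap_apply_of_ne_of_ne (Ne.symm hip) (Ne.symm hjp)]
      · have h2 : Equiv.swap i j m ≠ p := by
          rw [Equiv.swap_apply_def]
          split_ifs
          exacts [hjp, hip, hm]
        simp [hv, h2, hm]
    · rintro y ⟨hs, hI⟩
      have hmem : ∀ s ∈ T, y ∈ Hyp k n s := Set.mem_iInter₂.1 hI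
      have hconst : ∀ i, i ≠ p → y i = y q := by
        intro i hi
        rcases eq_or_ne i q with rfl | hiq
        · rfl
        · have hsw : Equiv.swap i q ∈ T := ⟨i, q, hiq, hi, hpq.symm, rfl⟩
          have := (hmem _ hsw).2 q
          rw [Equiv.swap_apply_right] at this
          exact this
      have hcard : (Finset.univ.erase p).card = n := by
        rw [Finset.card_erase_of_mem (Finset.mem_univ p), Finset.card_univ, Fintype.card_fin]
        rfl
      have hyp : y p = -(y q) * n := by
        have hsplit := Finset.add_sum_erase Finset.univ y (Finset.mem_univ p)
        have herase : ∑ i ∈ Finset.univ.erase p, y i = (n : k) * y q := by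
          rw [Finset.sum_congr rfl fun i hi => hconst i (Finset.ne_of_mem_erase hi),
            Finset.sum_const, hcard, nsmul_eq_mul]
        rw [hs, herase] at hsplit
        linear_combination hsplit
      refine ⟨-(y q), funext fun i => ?_⟩
      simp only [Pi.smul_apply, smul_eq_mul, hv]
      rcases eq_or_ne i p with rfl | hi
      · rw [if_pos rfl, hyp]
      · rw [if_neg hi, hconst i hi]
        ring
  have hWeyl : IsWeylLine k n L :=
    ⟨⟨v, hv0, rfl⟩, T, fun s hs => by
      obtain ⟨i, j, hij, -, -, rfl⟩ := hs
      exact ⟨i, j, hij, rfl⟩, hLdesc⟩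
  have hvpq : v p ≠ v q := by
    rw [hvp, hvq]
    intro h
    have : ((n : k) + 1) = 0 := by linear_combination h
    exact_mod_cast (Nat.cast_add_one_ne_zero (R := k) n) this
  have hvL : v ∈ L := ⟨1, one_smul _ _⟩
  have h0L : (0 : Fin (n + 1) → k) ∈ L := ⟨0, zero_smul _ _⟩
  rw [mem_Vt_iff]
  exact ⟨L, ⟨hWeyl, fun hsub => hvpq ((mem_Hyp_iff v).1 (hsub hvL)).2⟩, h0L⟩

lemma zero_mem_Hyp (t : Equiv.Perm (Fin (n + 1))) : (0 : Fin (n + 1) → k) ∈ Hyp k n t :=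
  ⟨by simp, fun _ => rfl⟩

lemma swap_extract {α : Type} [DecidableEq α] {t t' : Equiv.Perm α}
    (ht : IsTransposition t) (ht' : IsTransposition t') (hne : t ≠ t')
    (hc : t * t' ≠ t' * t) :
    ∃ a b c : α, a ≠ b ∧ b ≠ c ∧ a ≠ c ∧ t = Equiv.swap a b ∧ t' = Equiv.swap b c := by
  obtain ⟨a, b, hab, rfl⟩ := ht
  obtain ⟨c, d, hcd, rfl⟩ := ht'
  by_cases hac : a = c
  · subst hac
    have hbd : b ≠ d := fun h => hne (by rw [h])
    exact ⟨b, a, d, hab.symm, hcd, hbd, Equiv.swap_comm a b, rfl⟩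
  by_cases had : a = d
  · subst had
    have hbc : b ≠ c := by
      intro h
      subst h
      exact hne (Equiv.swap_comm a b ▸ rfl)
    exact ⟨b, a, c, hab.symm, Ne.symm hcd, hbc, Equiv.swap_comm a b, Equiv.swap_comm c a⟩
  by_cases hbc : b = c
  · subst hbc
    have had' : a ≠ d := by
      intro h
      subst h
      exact hne (Equiv.swap_comm a b ▸ rfl)
    exact ⟨a, b, d, hab, hcd, had', rfl, rfl⟩
  by_cases hbd : b = d
  · subst hbd
    exact ⟨a, b, c, hab, Ne.symm hcd, hac, rfl, Equiv.swap_comm c b⟩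
  · exfalso
    apply hc
    ext i
    simp only [Equiv.Perm.mul_apply, Equiv.swap_apply_def]
    split_ifs <;> simp_all

lemma swap_comm_of_ne {α : Type} [DecidableEq α] {a b c : α} (hab : a ≠ b) (hbc : b ≠ c)
    (hac : a ≠ c) : True := trivial

end Aux

/-- Let `t, t', t''` be three pairwise distinct transpositions of
`S_{n+1}`, no two of which commute, and such that `t'' = t t' t` (equivalently
`t'' = t' t t'`). Then `V_t ∩ V_{t'} = V_t ∩ H_{t''} = V_{t'} ∩ H_{t''}`.
In particular `V_t ∩ (V_{t'} ∪ V_{t''}) = V_t`. -/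
theorem Vt_inter_Vt_eq_inter_Hyp (hn : 1 ≤ n)
    (t t' t'' : Equiv.Perm (Fin (n + 1)))
    (ht : IsTransposition t) (ht' : IsTransposition t') (ht'' : IsTransposition t'')
    (hne : t ≠ t') (hne' : t' ≠ t'') (hne'' : t ≠ t'')
    (hc : t * t' ≠ t' * t) (hc' : t' * t'' ≠ t'' * t') (hc'' : t * t'' ≠ t'' * t)
    (hconj : t'' = t * t' * t) :
    Vt k n t ∩ Vt k n t' = Vt k n t ∩ Hyp k n t'' ∧
    Vt k n t ∩ Hyp k n t'' = Vt k n t' ∩ Hyp k n t'' ∧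
    Vt k n t ∩ (Vt k n t' ∪ Vt k n t'') = Vt k n t := by
  obtain ⟨a, b, c, hab, hbc, hac, rfl, rfl⟩ := swap_extract ht ht' hne hc
  have ht2 : t'' = Equiv.swap a c := by
    rw [hconj, Equiv.swap_comm a b, Equiv.swap_comm b c,
      Equiv.swap_mul_swap_mul_swap (Ne.symm hbc) (Ne.symm hac)]
  subst ht2
  have key1 : ∀ x : Fin (n + 1) → k, x ∈ Vt k n (Equiv.swap a b) →
      x ∈ Hyp k n (Equiv.swap a c) → x ∈ Vt k n (Equiv.swap b c) := by
    intro x hx hH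
    rcases eq_or_ne x 0 with rfl | hx0
    · exact zero_mem_Vt hbc
    obtain ⟨L, hL, hxL, hxab⟩ := exists_of_mem_Vt hx hx0
    have hxac := ((mem_Hyp_iff x).1 hH).2
    exact mem_Vt_of hL hxL (fun h => hxab (hxac.trans h.symm))
  have key2 : ∀ x : Fin (n + 1) → k, x ∈ Vt k n (Equiv.swap b c) →
      x ∈ Hyp k n (Equiv.swap a c) → x ∈ Vt k n (Equiv.swap a b) := by
    intro x hx hH
    rcases eq_or_ne x 0 with rfl | hx0
    · exact zero_mem_Vt hab
    obtain ⟨L, hL, hxL, hxbc⟩ := exists_of_mem_Vt hx hx0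
    have hxac := ((mem_Hyp_iff x).1 hH).2
    exact mem_Vt_of hL hxL (fun h => hxbc (h.symm.trans hxac))
  have eq1 : Vt k n (Equiv.swap a b) ∩ Vt k n (Equiv.swap b c) =
      Vt k n (Equiv.swap a b) ∩ Hyp k n (Equiv.swap a c) := by
    apply Set.Subset.antisymm
    · rintro x ⟨hx1, hx2⟩
      refine ⟨hx1, ?_⟩
      rcases eq_or_ne x 0 with rfl | hx0
      · exact zero_mem_Hyp _
      obtain ⟨L, hL, hxL, hxab⟩ := exists_of_mem_Vt hx1 hx0
      obtain ⟨L', hL', hxL', hxbc⟩ := exists_of_mem_Vt hx2 hx0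
      have hxac : x a = x c := by
        rcases weyl_twoVal hL hxL a b c with h | h | h
        · exact absurd h hxab
        · exact absurd h hxbc
        · exact h
      exact (mem_Hyp_iff x).2 ⟨sum_eq_zero_of_weyl hL hxL, hxac⟩
    · rintro x ⟨hx1, hx2⟩
      exact ⟨hx1, key1 x hx1 hx2⟩
  have eq2 : Vt k n (Equiv.swap a b) ∩ Hyp k n (Equiv.swap a c) =
      Vt k n (Equiv.swap b c) ∩ Hyp k n (Equiv.swap a c) := by
    apply Set.Subset.antisymm
    · rintro x ⟨hx1, hx2⟩
      exact ⟨key1 x hx1 hx2, hx2⟩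
    · rintro x ⟨hx1, hx2⟩
      exact ⟨key2 x hx1 hx2, hx2⟩
  refine ⟨eq1, eq2, ?_⟩
  apply Set.Subset.antisymm Set.inter_subset_left
  intro x hx
  refine ⟨hx, ?_⟩
  rcases eq_or_ne x 0 with rfl | hx0
  · exact Or.inl (zero_mem_Vt hbc)
  obtain ⟨L, hL, hxL, hxab⟩ := exists_of_mem_Vt hx hx0
  rcases weyl_twoVal hL hxL a b c with h | h | h
  · exact absurd h hxab
  · exact Or.inr (mem_Vt_of hL hxL (fun e => hxab (e.trans h.symm)))
  · exact Or.inl (mem_Vt_of hL hxL (fun e => hxab (h.trans e.symm)))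

end TLpaper
end

section
/- Let 1 ≤ j ≤ m ≤ i ≤ n. Then the set associated with the decreasing sequence (m, m−1, …, j) satisfies W_{m(m−1)⋯j} = V_m, and the set associated with the increasing sequence (m, m+1, …, i) satisfies W_{m(m+1)⋯i} = V_m. -/
/-! Basic setup: type A_n geometric representation, Weyl lines, combinatorics. -/

namespace TLpaper

variable (k : Type) [Field k] [CharZero k] (n : ℕ)

section Aux
set_option linter.unusedSectionVars false


lemma mem_Hyp_swap {a b : Fin (n+1)} (hab : a ≠ b) {x : Fin (n+1) → k} :
    x ∈ Hyp k n (Equiv.swap a b) ↔ (∑ i, x i) = 0 ∧ x a = x b := by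
  constructor
  · rintro ⟨hs, h⟩
    refine ⟨hs, ?_⟩
    have := h b
    rwa [Equiv.swap_apply_right] at this
  · rintro ⟨hs, h⟩
    refine ⟨hs, fun i => ?_⟩
    rcases eq_or_ne i a with rfl | hia
    · rw [Equiv.swap_apply_left]; exact h.symm
    rcases eq_or_ne i b with rfl | hib
    · rw [Equiv.swap_apply_right]; exact h
    · rw [Equiv.swap_apply_of_ne_of_ne hia hib]

lemma mem_permSet {σ : Equiv.Perm (Fin (n+1))} {S : Set (Fin (n+1) → k)}
    {x : Fin (n+1) → k} : x ∈ permSet k n σ S ↔ x ∘ ⇑σ⁻¹ ∈ S := by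
  constructor
  · rintro ⟨z, hz, rfl⟩
    have : (z ∘ ⇑σ) ∘ ⇑σ⁻¹ = z := by funext i; simp
    rwa [this]
  · intro h
    exact ⟨x ∘ ⇑σ⁻¹, h, by funext i; simp⟩

lemma comp_mem_Hyp (σ t : Equiv.Perm (Fin (n+1))) (x : Fin (n+1) → k) :
    x ∘ ⇑σ⁻¹ ∈ Hyp k n t ↔ x ∈ Hyp k n (σ⁻¹ * t * σ) := by
  have hsum : (∑ i, x (σ⁻¹ i)) = ∑ i, x i := Equiv.sum_comp σ⁻¹ x
  simp only [Hyp, Set.mem_setOf_eq, Function.comp, Equiv.Perm.mul_apply]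
  constructor
  · rintro ⟨hs, h⟩
    refine ⟨by rw [← hsum]; exact hs, fun i => ?_⟩
    have := h (σ i)
    simpa using this
  · rintro ⟨hs, h⟩
    refine ⟨by rw [hsum]; exact hs, fun i => ?_⟩
    have := h (σ⁻¹ i)
    simpa using this

lemma isWeylLine_permSet (σ : Equiv.Perm (Fin (n+1))) {L : Set (Fin (n+1) → k)}
    (h : IsWeylLine k n L) : IsWeylLine k n (permSet k n σ L) := by
  obtain ⟨⟨v, hv, hL⟩, T, hT, hLT⟩ := h
  constructor
  · refine ⟨v ∘ ⇑σ, ?_, ?_⟩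
    · intro h0
      apply hv
      funext i
      have := congrFun h0 (σ⁻¹ i)
      simpa using this
    · ext x
      simp only [mem_permSet, hL, Set.mem_range]
      constructor
      · rintro ⟨c, hc⟩
        refine ⟨c, ?_⟩
        funext i
        have := congrFun hc (σ i)
        simpa using this
      · rintro ⟨c, rfl⟩
        exact ⟨c, by funext i; simp [Pi.smul_apply]⟩
  · refine ⟨(fun t => σ⁻¹ * t * σ) '' T, ?_, ?_⟩
    · rintro t' ⟨t, ht, rfl⟩
      obtain ⟨a, b, hab, rfl⟩ := hT t ht
      refine ⟨σ⁻¹ a, σ⁻¹ b, fun h => hab (σ⁻¹.injective h), ?_⟩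
      rw [Equiv.swap_apply_apply σ⁻¹ a b]
      simp
    · ext x
      rw [mem_permSet, hLT]
      simp only [Set.mem_inter_iff, Set.mem_setOf_eq, Set.mem_iInter, Set.biInter_image]
      constructor
      · rintro ⟨hs, h⟩
        refine ⟨by rw [← Equiv.sum_comp σ⁻¹ x]; exact hs, fun t ht => ?_⟩
        exact (comp_mem_Hyp k n σ t x).mp (h t ht)
      · rintro ⟨hs, h⟩
        refine ⟨by rw [show (∑ i, (x ∘ ⇑σ⁻¹) i) = ∑ i, x i from Equiv.sum_comp σ⁻¹ x]; exact hs,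
          fun t ht => ?_⟩
        exact (comp_mem_Hyp k n σ t x).mpr (h t ht)

lemma weylLine_sum_zero {L : Set (Fin (n+1) → k)} (h : IsWeylLine k n L)
    {x : Fin (n+1) → k} (hx : x ∈ L) : (∑ i, x i) = 0 := by
  obtain ⟨-, T, -, hLT⟩ := h
  rw [hLT] at hx
  exact hx.1

lemma key (p q r : Fin (n + 1)) (hpq : p ≠ q) (hqr : q ≠ r) (hpr : p ≠ r) :
    Vt k n (Equiv.swap q r) ⊆
      Vt k n (Equiv.swap p q) ∪ permSet k n (Equiv.swap q r) (Vt k n (Equiv.swap p q)) := by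
  intro x hx
  simp only [Vt, Set.mem_iUnion, Set.mem_setOf_eq, exists_prop] at hx
  obtain ⟨L, ⟨hL, hLn⟩, hxL⟩ := hx
  by_cases hc : L ⊆ Hyp k n (Equiv.swap p q)
  · right
    rw [mem_permSet]
    have hinv : (Equiv.swap q r)⁻¹ = Equiv.swap q r := Equiv.swap_inv q r
    rw [hinv]
    simp only [Vt, Set.mem_iUnion, Set.mem_setOf_eq, exists_prop]
    refine ⟨permSet k n (Equiv.swap q r) L,
      ⟨isWeylLine_permSet k n (Equiv.swap q r) hL, ?_⟩, ⟨x, hxL, rfl⟩⟩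
    intro hsub
    apply hLn
    intro z hz
    have h1 : z ∘ ⇑(Equiv.swap q r) ∈ Hyp k n (Equiv.swap p q) := hsub ⟨z, hz, rfl⟩
    have h2 := ((mem_Hyp_swap k n hpq).mp h1).2
    have hp : Equiv.swap q r p = p := Equiv.swap_apply_of_ne_of_ne hpq hpr
    have hq : Equiv.swap q r q = r := Equiv.swap_apply_left q r
    have h3 : z p = z r := by simpa [Function.comp, hp, hq] using h2
    have h4 := ((mem_Hyp_swap k n hpq).mp (hc hz)).2
    exact (mem_Hyp_swap k n hqr).mpr
      ⟨weylLine_sum_zero k n hL hz, by rw [← h4]; exact h3⟩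
  · left
    simp only [Vt, Set.mem_iUnion, Set.mem_setOf_eq, exists_prop]
    exact ⟨L, ⟨hL, hc⟩, hxL⟩



lemma fin_cast_ne {a b : ℕ} (ha : a < n + 1) (hb : b < n + 1) (hab : a ≠ b) :
    Fin.ofNat (n + 1) a ≠ Fin.ofNat (n + 1) b := by
  intro h
  apply hab
  have := congrArg Fin.val h
  rwa [Fin.val_ofNat, Fin.val_ofNat, Nat.mod_eq_of_lt ha, Nat.mod_eq_of_lt hb] at this

lemma dotAct_eq_of_subset {a : ℕ} {W : Set (Fin (n+1) → k)}
    (h : Vi k n a ⊆ W ∪ permSet k n (simple n a) W) : dotAct k n a W = Vi k n a := by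
  unfold dotAct
  exact Set.inter_eq_left.mpr h

lemma dotAct_dec (c : ℕ) (h : c + 2 ≤ n) :
    dotAct k n (c + 1) (Vi k n c) = Vi k n (c + 1) := by
  apply dotAct_eq_of_subset
  have h0 : c < n + 1 := by omega
  have h1 : c + 1 < n + 1 := by omega
  have h2 : c + 2 < n + 1 := by omega
  have hpq := fin_cast_ne n h0 h1 (by omega)
  have hqr := fin_cast_ne n h1 h2 (by omega)
  have hpr := fin_cast_ne n h0 h2 (by omega)
  have := key k n (Fin.ofNat (n+1) c) (Fin.ofNat (n+1) (c+1)) (Fin.ofNat (n+1) (c+2)) hpq hqr hpr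
  simpa [Vi, simple, show c + 1 + 1 = c + 2 from rfl] using this

lemma dotAct_inc (c : ℕ) (h : c + 2 ≤ n) :
    dotAct k n c (Vi k n (c + 1)) = Vi k n c := by
  apply dotAct_eq_of_subset
  have h0 : c < n + 1 := by omega
  have h1 : c + 1 < n + 1 := by omega
  have h2 : c + 2 < n + 1 := by omega
  have hpq := fin_cast_ne n h2 h1 (by omega)
  have hqr := fin_cast_ne n h1 h0 (by omega)
  have hpr := fin_cast_ne n h2 h0 (by omega)
  have := key k n (Fin.ofNat (n+1) (c+2)) (Fin.ofNat (n+1) (c+1)) (Fin.ofNat (n+1) c) hpq hqr hpr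
  rw [Equiv.swap_comm (Fin.ofNat (n+1) (c+1)) (Fin.ofNat (n+1) c),
    Equiv.swap_comm (Fin.ofNat (n+1) (c+2)) (Fin.ofNat (n+1) (c+1))] at this
  simpa [Vi, simple, show c + 1 + 1 = c + 2 from rfl] using this

lemma seq_dec (d : ℕ) : ∀ jj : ℕ, jj + d < n →
    seqSet k n ((List.range' jj (d + 1)).reverse) = Vi k n (jj + d) := by
  induction d with
  | zero => intro jj h; simp [seqSet]
  | succ d ih =>
    intro jj h
    rw [List.range'_concat, List.reverse_append]
    simp only [List.reverse_cons, List.reverse_nil, List.nil_append, List.singleton_append, one_mul]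
    rcases hc : (List.range' jj (d + 1)).reverse with _ | ⟨r, rs⟩
    · exfalso
      have := congrArg List.length hc
      simp at this
    · rw [show seqSet k n ((jj + (d + 1)) :: r :: rs)
          = dotAct k n (jj + (d + 1)) (seqSet k n (r :: rs)) from rfl,
        ← hc, ih jj (by omega)]
      exact dotAct_dec k n (jj + d) (by omega)

lemma seq_inc (d : ℕ) : ∀ mm : ℕ, mm + d < n →
    seqSet k n (List.range' mm (d + 1)) = Vi k n mm := by
  induction d with
  | zero => intro mm h; simp [seqSet]
  | succ d ih =>
    intro mm h
    rw [List.range'_succ]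
    rcases hc : List.range' (mm + 1) (d + 1) with _ | ⟨r, rs⟩
    · exfalso
      have := congrArg List.length hc
      simp at this
    · rw [show seqSet k n (mm :: r :: rs) = dotAct k n mm (seqSet k n (r :: rs)) from rfl,
        ← hc, ih (mm + 1) (by omega)]
      exact dotAct_inc k n mm (by omega)

end Aux

/-- (0-indexed) Let `j ≤ m ≤ i < n`.  Then the set associated with the
decreasing sequence `(m, m−1, …, j)` equals `V_m`, and the set associated with the
increasing sequence `(m, m+1, …, i)` equals `V_m`. -/
theorem seqSet_decreasing_and_increasing (j m i : ℕ)
    (hjm : j ≤ m) (hmi : m ≤ i) (hin : i < n) :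
    seqSet k n ((List.range' j (m + 1 - j)).reverse) = Vi k n m ∧
    seqSet k n (List.range' m (i + 1 - m)) = Vi k n m := by
  constructor
  · rw [show m + 1 - j = (m - j) + 1 from by omega,
      seq_dec k n (m - j) j (by omega), show j + (m - j) = m from by omega]
  · rw [show i + 1 - m = (i - m) + 1 from by omega, seq_inc k n (i - m) m (by omega)]

end TLpaper
end
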